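/- arXiv:2508.06792 — 3 statements merged into one kernel-verified Lean document; each statement's English description precedes it below -/
import Mathlib

section
/- Define the differences from the maximum u_k = x_m − x_k for each index k ≠ m, and set Q = Σ_{k≠m} u_k and R² = Σ_{k≠m} u_k². Then the associated statistic h̃* = sqrt(2/(n−2)) · h* satisfies (h̃*)² = R² / ( (n−1)·R² − Q² ). -/
open Finset Real

/-- Sum of squared pairwise differences over all unordered pairs of distinct
indices, both different from the reference index `m`. -/
noncomputable def pairSum {n : ℕ} (x : Fin n → ℝ) (m : Fin n) : ℝ :=
  ∑ p ∈ Finset.univ.filter (fun p : Fin n × Fin n => p.1 < p.2 ∧ p.1 ≠ m ∧ p.2 ≠ m),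
    (x p.1 - x p.2) ^ 2

/-- The h* statistic with reference index `m`. -/
noncomputable def hstar {n : ℕ} (x : Fin n → ℝ) (m : Fin n) : ℝ :=
  Real.sqrt (((∑ k, (x k - x m) ^ 2) / ((n : ℝ) - 1)) /
    (pairSum x m / (((n : ℝ) - 1) * ((n : ℝ) - 2) / 2)))

/-- with `u_k = x_m − x_k` for `k ≠ m`, `Q = Σ u_k`, `R² = Σ u_k²`,
the rescaled statistic `h̃* = sqrt(2/(n−2))·h*` satisfies
`(h̃*)² = R² / ((n−1)·R² − Q²)`. -/
theorem htilde_sq_eq {n : ℕ} (hn : 3 ≤ n) (x : Fin n → ℝ) (m : Fin n)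
    (hmax : ∀ k, x k ≤ x m)
    (hne : ∃ i j, i ≠ m ∧ j ≠ m ∧ x i ≠ x j)
    (Q R2 : ℝ)
    (hQ : Q = ∑ k ∈ Finset.univ.filter (fun k => k ≠ m), (x m - x k))
    (hR2 : R2 = ∑ k ∈ Finset.univ.filter (fun k => k ≠ m), (x m - x k) ^ 2) :
    (Real.sqrt (2 / ((n : ℝ) - 2)) * hstar x m) ^ 2 =
      R2 / (((n : ℝ) - 1) * R2 - Q ^ 2) := by
  have hn3 : (3 : ℝ) ≤ (n : ℝ) := by exact_mod_cast hn
  set S : Finset (Fin n) := Finset.univ.filter (fun k => k ≠ m) with hS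
  have hcard : (S.card : ℝ) = (n : ℝ) - 1 := by
    have : S = Finset.univ.erase m := by
      ext k; simp [hS]
    rw [this, Finset.card_erase_of_mem (Finset.mem_univ m)]
    simp only [Finset.card_univ, Fintype.card_fin]
    have : 1 ≤ n := by omega
    push_cast [Nat.cast_sub this]
    ring
  -- the double-sum expansion
  have hdouble : ∑ i ∈ S, ∑ j ∈ S, (x i - x j) ^ 2
      = 2 * (((n : ℝ) - 1) * R2 - Q ^ 2) := by
    have h1 : ∑ i ∈ S, ∑ j ∈ S, (x i - x j) ^ 2
        = ∑ i ∈ S, (R2 - 2 * (x m - x i) * Q + (S.card : ℝ) * (x m - x i) ^ 2) := by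
      refine Finset.sum_congr rfl fun i _ => ?_
      have : ∀ j, (x i - x j) ^ 2
          = (x m - x j) ^ 2 - 2 * (x m - x i) * (x m - x j) + (x m - x i) ^ 2 := by
        intro j; ring
      simp_rw [this]
      rw [Finset.sum_add_distrib, Finset.sum_sub_distrib, ← hR2, ← Finset.mul_sum, ← hQ,
        Finset.sum_const, nsmul_eq_mul]
    have eA : ∑ _i ∈ S, R2 = (S.card : ℝ) * R2 := by
      rw [Finset.sum_const, nsmul_eq_mul]
    have eB : ∑ i ∈ S, 2 * (x m - x i) * Q = 2 * Q ^ 2 := by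
      rw [← Finset.sum_mul, ← Finset.mul_sum, ← hQ]; ring
    have eC : ∑ i ∈ S, (S.card : ℝ) * (x m - x i) ^ 2 = (S.card : ℝ) * R2 := by
      rw [← Finset.mul_sum, ← hR2]
    rw [h1, Finset.sum_add_distrib, Finset.sum_sub_distrib, eA, eB, eC, hcard]
    ring
  -- relate double sum to pairSum
  have hpair : pairSum x m = ((n : ℝ) - 1) * R2 - Q ^ 2 := by
    have hDS : ∑ i ∈ S, ∑ j ∈ S, (x i - x j) ^ 2
        = ∑ p ∈ S ×ˢ S, (x p.1 - x p.2) ^ 2 := by rw [Finset.sum_product]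
    set D : Finset (Fin n × Fin n) := S ×ˢ S with hD
    have hsplit : ∑ p ∈ D, (x p.1 - x p.2) ^ 2
        = ∑ p ∈ D.filter (fun p => p.1 < p.2), (x p.1 - x p.2) ^ 2
          + ∑ p ∈ D.filter (fun p => ¬ p.1 < p.2), (x p.1 - x p.2) ^ 2 :=
      (Finset.sum_filter_add_sum_filter_not _ _ _).symm
    have hP : D.filter (fun p => p.1 < p.2)
        = Finset.univ.filter (fun p : Fin n × Fin n => p.1 < p.2 ∧ p.1 ≠ m ∧ p.2 ≠ m) := by
      ext p
      simp only [hD, hS, Finset.mem_filter, Finset.mem_product, Finset.mem_univ, true_and]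
      tauto
    have hgt : ∑ p ∈ D.filter (fun p => ¬ p.1 < p.2), (x p.1 - x p.2) ^ 2
        = ∑ p ∈ D.filter (fun p => p.2 < p.1), (x p.1 - x p.2) ^ 2 := by
      symm
      apply Finset.sum_subset
      · intro p hp
        simp only [Finset.mem_filter] at hp ⊢
        exact ⟨hp.1, not_lt.mpr hp.2.le⟩
      · intro p hp hnp
        simp only [Finset.mem_filter] at hp hnp
        have h21 : ¬ p.2 < p.1 := fun h => hnp ⟨hp.1, h⟩
        have : p.1 = p.2 := le_antisymm (not_lt.mp h21) (not_lt.mp hp.2)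
        rw [this]; ring
    have hswap : ∑ p ∈ D.filter (fun p => p.2 < p.1), (x p.1 - x p.2) ^ 2
        = ∑ p ∈ D.filter (fun p => p.1 < p.2), (x p.1 - x p.2) ^ 2 := by
      apply Finset.sum_nbij' (fun p => (p.2, p.1)) (fun p => (p.2, p.1))
      · intro p hp
        simp only [hD, Finset.mem_filter, Finset.mem_product] at hp ⊢
        exact ⟨⟨hp.1.2, hp.1.1⟩, hp.2⟩
      · intro p hp
        simp only [hD, Finset.mem_filter, Finset.mem_product] at hp ⊢
        exact ⟨⟨hp.1.2, hp.1.1⟩, hp.2⟩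
      · intro p _; rfl
      · intro p _; rfl
      · intro p _; ring
    have : ∑ p ∈ D, (x p.1 - x p.2) ^ 2 = 2 * pairSum x m := by
      rw [hsplit, hgt, hswap, hP, pairSum]; ring
    have h2 : 2 * pairSum x m = 2 * (((n : ℝ) - 1) * R2 - Q ^ 2) := by
      rw [← this, ← hDS, hdouble]
    linarith
  -- positivity of pairSum
  have hpos : 0 < pairSum x m := by
    obtain ⟨i, j, him, hjm, hij⟩ := hne
    have hij' : i ≠ j := fun h => hij (by rw [h])
    apply Finset.sum_pos' (fun p _ => sq_nonneg _)
    rcases lt_or_gt_of_ne hij' with h | h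
    · refine ⟨(i, j), ?_, ?_⟩
      · simp [h, him, hjm]
      · have : x i - x j ≠ 0 := sub_ne_zero_of_ne hij
        positivity
    · refine ⟨(j, i), ?_, ?_⟩
      · simp [h, him, hjm]
      · have : x j - x i ≠ 0 := sub_ne_zero_of_ne (Ne.symm hij)
        positivity
  -- numerator sum equals R2
  have hsum : ∑ k, (x k - x m) ^ 2 = R2 := by
    rw [hR2]
    rw [← Finset.sum_filter_of_ne (p := fun k => k ≠ m)
      (f := fun k => (x k - x m) ^ 2)]
    · exact Finset.sum_congr rfl fun k _ => by ring
    · intro k _ hk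
      intro hkm
      apply hk
      rw [hkm]; ring
  -- finish
  have hn1 : (0:ℝ) < (n : ℝ) - 1 := by linarith
  have hn2 : (0:ℝ) < (n : ℝ) - 2 := by linarith
  rw [hstar, ← Real.sqrt_mul (by positivity), Real.sq_sqrt (by positivity)]
  rw [hsum, ← hpair]
  have hps : pairSum x m ≠ 0 := ne_of_gt hpos
  field_simp
end

section
/- The h* statistic always satisfies h* ≥ 1/√2; equivalently, (h*)² ≥ 1/2 for every admissible data set. -/
open Finset Real

theorem key {n : ℕ} (hn : 3 ≤ n) (x : Fin n → ℝ) (m : Fin n)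
    (hmax : ∀ k, x k ≤ x m) :
    pairSum x m ≤ ((n : ℝ) - 2) * ∑ k, (x k - x m) ^ 2 := by
  set y : Fin n → ℝ := fun k => x k - x m with hy
  set t : Finset (Fin n) := Finset.univ.erase m with ht
  have hcard : (t.card : ℝ) = (n : ℝ) - 1 := by
    rw [ht, Finset.card_erase_of_mem (Finset.mem_univ m), Finset.card_univ, Fintype.card_fin]
    have : 1 ≤ n := by omega
    push_cast [Nat.cast_sub this]; ring
  set A : ℝ := ∑ k ∈ t, y k ^ 2 with hA
  set B : ℝ := ∑ k ∈ t, y k with hB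
  have hS : ∑ k, (x k - x m) ^ 2 = A := by
    rw [hA, ht, ← Finset.sum_erase_add Finset.univ _ (Finset.mem_univ m)]
    simp [hy]
  have hF : Finset.univ.filter (fun p : Fin n × Fin n => p.1 < p.2 ∧ p.1 ≠ m ∧ p.2 ≠ m)
      = (t ×ˢ t).filter (fun p => p.1 < p.2) := by
    ext p
    simp [ht, Finset.mem_product, Finset.mem_erase]
    tauto
  have hdiag : ∑ p ∈ (t ×ˢ t).filter (fun p => ¬ p.1 < p.2 ∧ ¬ p.2 < p.1),
      (y p.1 - y p.2) ^ 2 = 0 := by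
    apply Finset.sum_eq_zero
    intro p hp
    simp only [Finset.mem_filter] at hp
    have : p.1 = p.2 := le_antisymm (le_of_not_gt hp.2.2) (le_of_not_gt hp.2.1)
    rw [this]; ring
  have hswap : ∑ p ∈ (t ×ˢ t).filter (fun p => ¬ p.1 < p.2 ∧ p.2 < p.1),
      (y p.1 - y p.2) ^ 2 = ∑ p ∈ (t ×ˢ t).filter (fun p => p.1 < p.2), (y p.1 - y p.2) ^ 2 := by
    apply Finset.sum_nbij' (fun p => Prod.swap p) (fun p => Prod.swap p)
    · intro p hp; simp only [Finset.mem_filter, Finset.mem_product] at hp ⊢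
      exact ⟨⟨hp.1.2, hp.1.1⟩, hp.2.2⟩
    · intro p hp; simp only [Finset.mem_filter, Finset.mem_product] at hp ⊢
      exact ⟨⟨hp.1.2, hp.1.1⟩, ⟨asymm hp.2, hp.2⟩⟩
    · intro p _; simp
    · intro p _; simp
    · intro p _; simp [Prod.swap]; ring
  have hdouble : ∑ p ∈ t ×ˢ t, (y p.1 - y p.2) ^ 2
      = 2 * ∑ p ∈ (t ×ˢ t).filter (fun p => p.1 < p.2), (y p.1 - y p.2) ^ 2 := by
    rw [← Finset.sum_filter_add_sum_filter_not (t ×ˢ t) (fun p => p.1 < p.2)]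
    have h2 := Finset.sum_filter_add_sum_filter_not
      ((t ×ˢ t).filter (fun p => ¬ p.1 < p.2)) (fun p => p.2 < p.1)
      (fun p => (y p.1 - y p.2) ^ 2)
    rw [Finset.filter_filter, Finset.filter_filter] at h2
    linarith [h2, hswap, hdiag]
  have hexp : ∑ p ∈ t ×ˢ t, (y p.1 - y p.2) ^ 2 = 2 * ((t.card : ℝ) * A - B ^ 2) := by
    rw [Finset.sum_product]
    have hrow : ∀ i ∈ t, ∑ j ∈ t, (y i - y j) ^ 2
        = (t.card : ℝ) * y i ^ 2 - 2 * y i * B + A := by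
      intro i _
      have h3 : ∀ j ∈ t, (y i - y j) ^ 2 = y i ^ 2 - 2 * y i * y j + y j ^ 2 := by
        intros; ring
      rw [Finset.sum_congr rfl h3, Finset.sum_add_distrib, Finset.sum_sub_distrib,
        Finset.sum_const, ← Finset.mul_sum, nsmul_eq_mul, ← hA, ← hB]
    have hmid : ∑ i ∈ t, 2 * y i * B = 2 * B ^ 2 := by
      rw [← Finset.sum_mul]
      have : ∑ i ∈ t, 2 * y i = 2 * B := by rw [Finset.mul_sum]
      rw [this]; ring
    rw [Finset.sum_congr rfl hrow, Finset.sum_add_distrib, Finset.sum_sub_distrib,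
      Finset.sum_const, ← Finset.mul_sum, nsmul_eq_mul, ← hA, hmid]
    ring
  have hAB : A ≤ B ^ 2 := by
    have h1 : ∀ k ∈ t, 0 ≤ -y k := by
      intro k _; simp only [hy, neg_sub, sub_nonneg]; exact hmax k
    calc A = ∑ k ∈ t, (-y k) ^ 2 := by simp [hA]
      _ ≤ (∑ k ∈ t, -y k) ^ 2 := Finset.sum_sq_le_sq_sum_of_nonneg h1
      _ = B ^ 2 := by rw [Finset.sum_neg_distrib, ← hB]; ring
  have hps : pairSum x m = (t.card : ℝ) * A - B ^ 2 := by
    rw [pairSum, hF]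
    have h4 : ∀ p ∈ (t ×ˢ t).filter (fun p : Fin n × Fin n => p.1 < p.2),
        (x p.1 - x p.2) ^ 2 = (y p.1 - y p.2) ^ 2 := by
      intro p _; simp only [hy]; ring
    rw [Finset.sum_congr rfl h4]
    linarith [hdouble.symm.trans hexp]
  rw [hps, hS, hcard]
  nlinarith [hAB]

theorem pairSum_pos {n : ℕ} (x : Fin n → ℝ) (m : Fin n)
    (hne : ∃ i j, i ≠ m ∧ j ≠ m ∧ x i ≠ x j) : 0 < pairSum x m := by
  obtain ⟨i, j, him, hjm, hij⟩ := hne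
  have hne' : i ≠ j := fun h => hij (by rw [h])
  set q : Fin n × Fin n := if i < j then (i, j) else (j, i) with hq
  have hqmem : q ∈ Finset.univ.filter
      (fun p : Fin n × Fin n => p.1 < p.2 ∧ p.1 ≠ m ∧ p.2 ≠ m) := by
    rcases lt_or_gt_of_ne hne' with h | h
    · simp [hq, if_pos h, h, him, hjm]
    · simp [hq, if_neg (asymm h), h, him, hjm]
  have hq12 : x q.1 ≠ x q.2 := by
    rcases lt_or_gt_of_ne hne' with h | h
    · simp only [hq, if_pos h]; exact hij
    · simp only [hq, if_neg (asymm h)]; exact hij.symm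
  have hqpos : 0 < (x q.1 - x q.2) ^ 2 :=
    lt_of_le_of_ne (sq_nonneg _) (Ne.symm (pow_ne_zero 2 (sub_ne_zero_of_ne hq12)))
  have := Finset.single_le_sum (f := fun p : Fin n × Fin n => (x p.1 - x p.2) ^ 2)
    (fun p _ => sq_nonneg _) hqmem
  calc (0:ℝ) < (x q.1 - x q.2) ^ 2 := hqpos
    _ ≤ pairSum x m := this

/-- the h* statistic always satisfies `h* ≥ 1/√2`; equivalently
`(h*)² ≥ 1/2`. -/
theorem hstar_ge {n : ℕ} (hn : 3 ≤ n) (x : Fin n → ℝ) (m : Fin n)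
    (hmax : ∀ k, x k ≤ x m)
    (hne : ∃ i j, i ≠ m ∧ j ≠ m ∧ x i ≠ x j) :
    1 / Real.sqrt 2 ≤ hstar x m ∧ 1 / 2 ≤ (hstar x m) ^ 2 := by
  have hP := pairSum_pos x m hne
  have hkey := key hn x m hmax
  have hn3 : (3:ℝ) ≤ (n:ℝ) := by exact_mod_cast hn
  have hn1 : (0:ℝ) < (n:ℝ) - 1 := by linarith
  have hn2 : (0:ℝ) < (n:ℝ) - 2 := by linarith
  set S := ∑ k, (x k - x m) ^ 2 with hSdef
  have hr : (S / ((n:ℝ) - 1)) / (pairSum x m / (((n:ℝ) - 1) * ((n:ℝ) - 2) / 2))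
      = (((n:ℝ) - 2) * S) / (2 * pairSum x m) := by
    field_simp
  have hge : 1 / 2 ≤ (S / ((n:ℝ) - 1)) / (pairSum x m / (((n:ℝ) - 1) * ((n:ℝ) - 2) / 2)) := by
    rw [hr, le_div_iff₀ (by positivity)]
    linarith
  have hsq : (hstar x m) ^ 2
      = (S / ((n:ℝ) - 1)) / (pairSum x m / (((n:ℝ) - 1) * ((n:ℝ) - 2) / 2)) := by
    rw [hstar, Real.sq_sqrt (by linarith)]
  constructor
  · have h12 : (1:ℝ) / Real.sqrt 2 = Real.sqrt (1 / 2) := by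
      rw [one_div, ← Real.sqrt_inv, one_div]
    rw [h12, hstar]
    exact Real.sqrt_le_sqrt hge
  · rw [hsq]; exact hge
end

section
/- Trigonometric representation of h̃*: let u_k = x_m − x_k for each index k ≠ m, Q = Σ_{k≠m} u_k and R² = Σ_{k≠m} u_k², with R > 0 and Q² < (n−1)·R², and set c = Q / (sqrt(n−1) · R). Then 1/sqrt(n−1) ≤ c ≤ 1, and the statistic h̃* = sqrt(2/(n−2))·h* satisfies h̃* = R / sqrt((n−1)·R² − Q²) = 1 / ( sqrt(n−1) · sqrt(1 − c²) ). -/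
open Finset Real

lemma double_sum_eq_two_pairSum {n : ℕ} (x : Fin n → ℝ) (m : Fin n) :
    ∑ i ∈ Finset.univ.filter (fun k => k ≠ m), ∑ j ∈ Finset.univ.filter (fun k => k ≠ m),
      (x i - x j) ^ 2 = 2 * pairSum x m := by
  classical
  set s := Finset.univ.filter (fun k : Fin n => k ≠ m) with hs
  rw [← Finset.sum_product']
  have hset : Finset.univ.filter (fun p : Fin n × Fin n => p.1 < p.2 ∧ p.1 ≠ m ∧ p.2 ≠ m)
      = (s ×ˢ s).filter (fun p => p.1 < p.2) := by
    ext p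
    simp only [Finset.mem_filter, Finset.mem_univ, true_and, Finset.mem_product, hs]
    tauto
  have h1 : ∑ p ∈ (s ×ˢ s).filter (fun p => p.1 < p.2), (x p.1 - x p.2) ^ 2 = pairSum x m := by
    rw [pairSum, hset]
  have h2 : ∑ p ∈ (s ×ˢ s).filter (fun p => ¬ p.1 < p.2) |>.filter (fun p => p.2 < p.1),
      (x p.1 - x p.2) ^ 2 = pairSum x m := by
    rw [← h1]
    refine Finset.sum_nbij' (fun p => (p.2, p.1)) (fun p => (p.2, p.1)) ?_ ?_ ?_ ?_ ?_
    · intro p hp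
      simp only [Finset.mem_filter, Finset.mem_product] at hp ⊢
      exact ⟨⟨hp.1.1.2, hp.1.1.1⟩, hp.2⟩
    · intro p hp
      simp only [Finset.mem_filter, Finset.mem_product] at hp ⊢
      exact ⟨⟨⟨hp.1.2, hp.1.1⟩, not_lt.mpr (le_of_lt hp.2)⟩, hp.2⟩
    · intro p _; rfl
    · intro p _; rfl
    · intro p _; ring
  have h3 : ∑ p ∈ (s ×ˢ s).filter (fun p => ¬ p.1 < p.2) |>.filter (fun p => ¬ p.2 < p.1),
      (x p.1 - x p.2) ^ 2 = 0 := by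
    refine Finset.sum_eq_zero fun p hp => ?_
    simp only [Finset.mem_filter] at hp
    have : p.1 = p.2 := le_antisymm (not_lt.mp hp.2) (not_lt.mp hp.1.2)
    rw [this]; ring
  rw [← Finset.sum_filter_add_sum_filter_not (s ×ˢ s) (fun p => p.1 < p.2),
    ← Finset.sum_filter_add_sum_filter_not ((s ×ˢ s).filter (fun p => ¬ p.1 < p.2))
      (fun p => p.2 < p.1), h1, h2, h3]
  ring

/-- trigonometric representation of h̃*. -/
theorem htilde_trig_repr {n : ℕ} (hn : 3 ≤ n) (x : Fin n → ℝ) (m : Fin n)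
    (hmax : ∀ k, x k ≤ x m)
    (Q R2 : ℝ)
    (hQ : Q = ∑ k ∈ Finset.univ.filter (fun k => k ≠ m), (x m - x k))
    (hR2 : R2 = ∑ k ∈ Finset.univ.filter (fun k => k ≠ m), (x m - x k) ^ 2)
    (hRpos : 0 < R2)
    (hQlt : Q ^ 2 < ((n : ℝ) - 1) * R2)
    (c : ℝ) (hc : c = Q / (Real.sqrt ((n : ℝ) - 1) * Real.sqrt R2)) :
    1 / Real.sqrt ((n : ℝ) - 1) ≤ c ∧ c ≤ 1 ∧
    Real.sqrt (2 / ((n : ℝ) - 2)) * hstar x m =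
      Real.sqrt R2 / Real.sqrt (((n : ℝ) - 1) * R2 - Q ^ 2) ∧
    Real.sqrt (2 / ((n : ℝ) - 2)) * hstar x m =
      1 / (Real.sqrt ((n : ℝ) - 1) * Real.sqrt (1 - c ^ 2)) := by
  classical
  set s := Finset.univ.filter (fun k : Fin n => k ≠ m) with hs
  have hN : (0 : ℝ) < (n : ℝ) - 1 := by
    have : (3 : ℝ) ≤ (n : ℝ) := by exact_mod_cast hn
    linarith
  have hN2 : (0 : ℝ) < (n : ℝ) - 2 := by
    have : (3 : ℝ) ≤ (n : ℝ) := by exact_mod_cast hn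
    linarith
  have hcard : (s.card : ℝ) = (n : ℝ) - 1 := by
    have hse : s = Finset.univ.erase m := by
      ext k; simp [hs, Finset.mem_erase]
    rw [hse, Finset.card_erase_of_mem (Finset.mem_univ m), Finset.card_univ, Fintype.card_fin]
    have h1 : 1 ≤ n := by omega
    push_cast [Nat.cast_sub h1]
    ring
  set S1 := ∑ k ∈ s, x k with hS1
  set S2 := ∑ k ∈ s, x k ^ 2 with hS2
  have hQ' : Q = ((n : ℝ) - 1) * x m - S1 := by
    rw [hQ, Finset.sum_sub_distrib, Finset.sum_const, nsmul_eq_mul, hcard]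
  have hR2' : R2 = S2 - 2 * x m * S1 + ((n : ℝ) - 1) * x m ^ 2 := by
    have : ∀ k ∈ s, (x m - x k) ^ 2 = x m ^ 2 - 2 * x m * x k + x k ^ 2 := fun k _ => by ring
    rw [hR2, Finset.sum_congr rfl this, Finset.sum_add_distrib, Finset.sum_sub_distrib,
      Finset.sum_const, nsmul_eq_mul, hcard, ← Finset.mul_sum, ← hS1, ← hS2]
    ring
  -- key identity for pairSum
  have hinner : ∀ i ∈ s, ∑ j ∈ s, (x i - x j) ^ 2
      = ((n : ℝ) - 1) * x i ^ 2 - 2 * x i * S1 + S2 := by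
    intro i _
    have : ∀ j ∈ s, (x i - x j) ^ 2 = x i ^ 2 - 2 * x i * x j + x j ^ 2 := fun j _ => by ring
    rw [Finset.sum_congr rfl this, Finset.sum_add_distrib, Finset.sum_sub_distrib,
      Finset.sum_const, nsmul_eq_mul, hcard, ← Finset.mul_sum, ← hS1, ← hS2]
  have hdouble : ∑ i ∈ s, ∑ j ∈ s, (x i - x j) ^ 2
      = 2 * (((n : ℝ) - 1) * S2 - S1 ^ 2) := by
    rw [Finset.sum_congr rfl hinner, Finset.sum_add_distrib, Finset.sum_sub_distrib,
      Finset.sum_const, nsmul_eq_mul, hcard, ← Finset.mul_sum, ← Finset.sum_mul]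
    simp only [← hS1, ← hS2]
    rw [show (∑ i ∈ s, 2 * x i) = 2 * S1 by rw [← Finset.mul_sum]]
    ring
  have hpair : pairSum x m = ((n : ℝ) - 1) * R2 - Q ^ 2 := by
    have := double_sum_eq_two_pairSum x m
    rw [← hs] at this
    rw [hdouble] at this
    rw [hQ', hR2']
    linarith [this]
  -- numerator sum over univ equals R2
  have hnum : ∑ k, (x k - x m) ^ 2 = R2 := by
    have hse : s = Finset.univ.erase m := by
      ext k; simp [hs, Finset.mem_erase]
    have : ∑ k, (x k - x m) ^ 2 = (x m - x m) ^ 2 + ∑ k ∈ Finset.univ.erase m, (x k - x m) ^ 2 :=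
      (Finset.add_sum_erase _ _ (Finset.mem_univ m)).symm
    rw [this, hR2, hse]
    simp only [sub_self, ne_eq, zero_pow, OfNat.ofNat_ne_zero, not_false_eq_true, zero_add]
    exact Finset.sum_congr rfl fun k _ => by ring
  have hPpos : 0 < ((n : ℝ) - 1) * R2 - Q ^ 2 := by linarith
  -- main equality 1
  have hmain : Real.sqrt (2 / ((n : ℝ) - 2)) * hstar x m =
      Real.sqrt R2 / Real.sqrt (((n : ℝ) - 1) * R2 - Q ^ 2) := by
    rw [hstar, hnum, hpair]
    rw [← Real.sqrt_mul (by positivity)]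
    rw [← Real.sqrt_div hRpos.le]
    congr 1
    field_simp
  have hQnonneg : 0 ≤ Q := by
    rw [hQ]
    exact Finset.sum_nonneg fun k _ => by linarith [hmax k]
  have hQsq : R2 ≤ Q ^ 2 := by
    rw [hQ, hR2]
    exact Finset.sum_sq_le_sq_sum_of_nonneg fun k _ => by linarith [hmax k]
  have hsN : (0:ℝ) < Real.sqrt ((n : ℝ) - 1) := Real.sqrt_pos.mpr hN
  have hsR : (0:ℝ) < Real.sqrt R2 := Real.sqrt_pos.mpr hRpos
  have hcle : c ≤ 1 := by
    rw [hc, div_le_one (by positivity)]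
    calc Q = Real.sqrt (Q ^ 2) := by rw [Real.sqrt_sq hQnonneg]
    _ ≤ Real.sqrt (((n : ℝ) - 1) * R2) := Real.sqrt_le_sqrt hQlt.le
    _ = Real.sqrt ((n : ℝ) - 1) * Real.sqrt R2 := Real.sqrt_mul hN.le _
  have hcge : 1 / Real.sqrt ((n : ℝ) - 1) ≤ c := by
    rw [hc]
    have hQge : Real.sqrt R2 ≤ Q := by
      calc Real.sqrt R2 ≤ Real.sqrt (Q ^ 2) := Real.sqrt_le_sqrt hQsq
      _ = Q := Real.sqrt_sq hQnonneg
    rw [div_le_div_iff₀ hsN (by positivity)]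
    calc 1 * (Real.sqrt ((n : ℝ) - 1) * Real.sqrt R2) = Real.sqrt R2 * Real.sqrt ((n:ℝ)-1) := by
          ring
    _ ≤ Q * Real.sqrt ((n:ℝ)-1) := by gcongr
  refine ⟨hcge, hcle, hmain, ?_⟩
  rw [hmain]
  have hc2 : 1 - c ^ 2 = (((n : ℝ) - 1) * R2 - Q ^ 2) / (((n : ℝ) - 1) * R2) := by
    rw [hc]
    rw [div_pow, mul_pow, Real.sq_sqrt hN.le, Real.sq_sqrt hRpos.le]
    field_simp
  have hsP : 0 < Real.sqrt (((n : ℝ) - 1) * R2 - Q ^ 2) := Real.sqrt_pos.mpr hPpos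
  rw [hc2, Real.sqrt_div (by positivity), Real.sqrt_mul hN.le]
  field_simp
end
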